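/- For integers N ≥ 1, define φ_N = −∑_{k=1}^N log( Γ(k)² / ( Γ(k − 1/2) Γ(k + 1/2) ) ), where Γ is the Euler Gamma function. Then the improper integral ∫_0^∞ (1/t)( e^{−4t} − 1/cosh²(t) ) dt converges, and lim_{N→∞} ( φ_N − (1/4) log N ) = −(1/4) ∫_0^∞ (1/t)( e^{−4t} − 1/cosh²(t) ) dt. -/

import Mathlib

open Real MeasureTheory Finset Filter


lemma my_sinh_le_mul_cosh {x : ℝ} (hx : 0 ≤ x) : Real.sinh x ≤ x * Real.cosh x := by
  have h : MonotoneOn (fun y : ℝ => y * Real.cosh y - Real.sinh y) (Set.Ici 0) := by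
    apply monotoneOn_of_deriv_nonneg (convex_Ici 0)
    · exact ((continuous_id.mul Real.continuous_cosh).sub Real.continuous_sinh).continuousOn
    · intro y _
      exact ((differentiable_id.mul Real.differentiable_cosh).sub
        Real.differentiable_sinh).differentiableAt.differentiableWithinAt
    · intro y hy
      have hd : HasDerivAt (fun y : ℝ => y * Real.cosh y - Real.sinh y)
          (1 * Real.cosh y + y * Real.sinh y - Real.cosh y) y :=
        ((hasDerivAt_id y).mul (Real.hasDerivAt_cosh y)).sub (Real.hasDerivAt_sinh y)
      rw [hd.deriv]
      have hy' : 0 ≤ y := le_of_lt (by simpa using hy)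
      nlinarith [Real.sinh_nonneg_iff.2 hy']
  have := h (Set.self_mem_Ici) hx hx
  simpa using this

lemma integrableOn_exp_neg_mul {c : ℝ} (hc : 0 < c) :
    IntegrableOn (fun t : ℝ => Real.exp (-(c * t))) (Set.Ioi 0) := by
  simpa [neg_mul] using exp_neg_integrableOn_Ioi 0 hc

lemma integral_exp_neg_mul {c : ℝ} (hc : 0 < c) :
    ∫ t in Set.Ioi (0:ℝ), Real.exp (-(c * t)) = 1 / c := by
  have := integral_comp_mul_left_Ioi (fun x : ℝ => Real.exp (-x)) 0 hc
  simp only [mul_zero] at this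
  rw [this, integral_exp_neg_Ioi]
  simp [abs_of_pos (inv_pos.2 hc), smul_eq_mul, one_div]


lemma inner_exp_eval {c d t : ℝ} (hcd : c ≤ d) (ht : 0 < t) :
    ∫ s in Set.Ioc c d, Real.exp (-(s * t)) =
      (Real.exp (-(c * t)) - Real.exp (-(d * t))) / t := by
  rw [← intervalIntegral.integral_of_le hcd]
  have h1 : ∫ s in c..d, Real.exp (-(s * t)) = t⁻¹ • ∫ u in c*t..d*t, Real.exp (-u) := by
    exact intervalIntegral.integral_comp_mul_right (fun u => Real.exp (-u)) ht.ne'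
  rw [h1]
  have h2 : ∫ u in c*t..d*t, Real.exp (-u) = ∫ v in -(d*t)..(-(c*t)), Real.exp v :=
    intervalIntegral.integral_comp_neg fun v => Real.exp v
  rw [h2, integral_exp]
  rw [smul_eq_mul]
  ring

lemma frullani {c d : ℝ} (hc : 0 < c) (hcd : c ≤ d) :
    IntegrableOn (fun t : ℝ => (Real.exp (-(c * t)) - Real.exp (-(d * t))) / t) (Set.Ioi 0) ∧
      ∫ t in Set.Ioi (0:ℝ), (Real.exp (-(c * t)) - Real.exp (-(d * t))) / t
        = Real.log d - Real.log c := by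
  have hd : 0 < d := hc.trans_le hcd
  set μ : Measure ℝ := volume.restrict (Set.Ioi 0) with hμ
  set ν : Measure ℝ := volume.restrict (Set.Ioc c d) with hν
  have hcont : Continuous (fun p : ℝ × ℝ => Real.exp (-(p.2 * p.1))) := by fun_prop
  have hmeas : AEStronglyMeasurable (fun p : ℝ × ℝ => Real.exp (-(p.2 * p.1))) (μ.prod ν) :=
    hcont.aestronglyMeasurable
  have hslice : ∀ t : ℝ, Integrable (fun s => Real.exp (-(s * t))) ν := by
    intro t
    exact (Continuous.integrableOn_Ioc (by fun_prop))
  have hbound : ∀ t ∈ Set.Ioi (0:ℝ),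
      (∫ s, ‖Real.exp (-(s * t))‖ ∂ν) ≤ (d - c) * Real.exp (-(c * t)) := by
    intro t ht
    have : (∫ s, ‖Real.exp (-(s * t))‖ ∂ν) = ∫ s in Set.Ioc c d, Real.exp (-(s * t)) := by
      congr 1; funext s; exact Real.norm_of_nonneg (Real.exp_nonneg _)
    rw [this]
    have hle : ∫ s in Set.Ioc c d, Real.exp (-(s * t))
        ≤ ∫ _s in Set.Ioc c d, Real.exp (-(c * t)) := by
      apply setIntegral_mono_on (hslice t) (integrableOn_const measure_Ioc_lt_top.ne)
        measurableSet_Ioc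
      intro s hs
      apply Real.exp_le_exp.2
      have := hs.1
      nlinarith [ht.out]
    calc ∫ s in Set.Ioc c d, Real.exp (-(s * t)) ≤ _ := hle
      _ ≤ (d - c) * Real.exp (-(c * t)) := by
          rw [setIntegral_const, smul_eq_mul, Real.volume_real_Ioc_of_le hcd]
  have hF : Integrable (Function.uncurry fun t s => Real.exp (-(s * t))) (μ.prod ν) := by
    refine (MeasureTheory.integrable_prod_iff hmeas).2 ⟨Eventually.of_forall fun t => hslice t, ?_⟩
    apply Integrable.mono ((integrableOn_exp_neg_mul hc).const_mul (d - c))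
    · exact hmeas.norm.integral_prod_right'
    · rw [ae_restrict_iff' measurableSet_Ioi]
      filter_upwards with t ht
      rw [Real.norm_of_nonneg (integral_nonneg fun s => norm_nonneg _),
        Real.norm_of_nonneg (mul_nonneg (by linarith) (Real.exp_nonneg _))]
      exact hbound t ht
  have hswap := MeasureTheory.integral_integral_swap hF
  have hRHS : ∫ s, ∫ t, Real.exp (-(s * t)) ∂μ ∂ν = Real.log d - Real.log c := by
    have : ∀ s ∈ Set.Ioc c d, (∫ t, Real.exp (-(s * t)) ∂μ) = 1 / s := by
      intro s hs
      exact integral_exp_neg_mul (hc.trans_le hs.1.le)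
    rw [hν, setIntegral_congr_fun measurableSet_Ioc this,
      ← intervalIntegral.integral_of_le hcd, integral_one_div, Real.log_div hd.ne' hc.ne']
    intro h
    rcases h with ⟨h1, _⟩
    simp only [inf_le_iff] at h1
    rcases h1 with h | h <;> linarith
  have hinner : ∀ t ∈ Set.Ioi (0:ℝ),
      (∫ s, Real.exp (-(s * t)) ∂ν) = (Real.exp (-(c * t)) - Real.exp (-(d * t))) / t :=
    fun t ht => inner_exp_eval hcd ht
  constructor
  · have := hF.integral_prod_left
    apply (IntegrableOn.congr_fun · hinner measurableSet_Ioi) at this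
    exact this
  · rw [← setIntegral_congr_fun measurableSet_Ioi hinner]
    rw [show (∫ t in Set.Ioi (0:ℝ), ∫ s, Real.exp (-(s * t)) ∂ν) =
      ∫ t, ∫ s, Real.exp (-(s * t)) ∂ν ∂μ from rfl, hswap, hRHS]


noncomputable def Sfun (k : ℕ) : ℝ :=
  Real.log (Real.Gamma (k:ℝ) ^ 2 / (Real.Gamma ((k:ℝ) - 1/2) * Real.Gamma ((k:ℝ) + 1/2)))

noncomputable def afun (j : ℕ) : ℝ :=
  Real.log ((j:ℝ)^2 / (((j:ℝ) - 1/2) * ((j:ℝ) + 1/2)))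

lemma Sfun_eq {k : ℕ} (hk : 1 ≤ k) :
    Sfun k = 2 * Real.log (Real.Gamma (k:ℝ)) - Real.log (Real.Gamma ((k:ℝ) - 1/2))
      - Real.log (Real.Gamma ((k:ℝ) + 1/2)) := by
  have hx : (1:ℝ) ≤ (k:ℝ) := by exact_mod_cast hk
  have h1 : (0:ℝ) < Real.Gamma (k:ℝ) := Real.Gamma_pos_of_pos (by linarith)
  have h2 : (0:ℝ) < Real.Gamma ((k:ℝ) - 1/2) := Real.Gamma_pos_of_pos (by linarith)
  have h3 : (0:ℝ) < Real.Gamma ((k:ℝ) + 1/2) := Real.Gamma_pos_of_pos (by linarith)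
  rw [Sfun, Real.log_div (by positivity) (by positivity), Real.log_mul h2.ne' h3.ne',
    Real.log_pow]
  push_cast
  ring

lemma afun_eq {j : ℕ} (hj : 1 ≤ j) :
    afun j = 2 * Real.log (j:ℝ) - Real.log ((j:ℝ) - 1/2) - Real.log ((j:ℝ) + 1/2) := by
  have hx : (1:ℝ) ≤ (j:ℝ) := by exact_mod_cast hj
  have h1 : (0:ℝ) < (j:ℝ)^2 := by nlinarith
  have h2 : (0:ℝ) < (j:ℝ) - 1/2 := by linarith
  have h3 : (0:ℝ) < (j:ℝ) + 1/2 := by linarith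
  rw [afun, Real.log_div h1.ne' (by positivity), Real.log_mul h2.ne' h3.ne', Real.log_pow]
  push_cast
  ring

lemma afun_nonneg {j : ℕ} (hj : 1 ≤ j) : 0 ≤ afun j := by
  have hx : (1:ℝ) ≤ (j:ℝ) := by exact_mod_cast hj
  apply Real.log_nonneg
  rw [le_div_iff₀ (by nlinarith)]
  nlinarith

lemma Sfun_succ {m : ℕ} (hm : 1 ≤ m) : Sfun (m+1) = Sfun m + afun m := by
  have hx : (1:ℝ) ≤ (m:ℝ) := by exact_mod_cast hm
  have hG1 : Real.Gamma ((m:ℝ) + 1) = (m:ℝ) * Real.Gamma (m:ℝ) :=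
    Real.Gamma_add_one (by linarith)
  have hG2 : Real.Gamma ((m:ℝ) + 1 - 1/2) = ((m:ℝ) - 1/2) * Real.Gamma ((m:ℝ) - 1/2) := by
    rw [show (m:ℝ) + 1 - 1/2 = ((m:ℝ) - 1/2) + 1 by ring]
    exact Real.Gamma_add_one (by linarith)
  have hG3 : Real.Gamma ((m:ℝ) + 1 + 1/2) = ((m:ℝ) + 1/2) * Real.Gamma ((m:ℝ) + 1/2) := by
    rw [show (m:ℝ) + 1 + 1/2 = ((m:ℝ) + 1/2) + 1 by ring]
    exact Real.Gamma_add_one (by linarith)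
  have h1 : (0:ℝ) < Real.Gamma (m:ℝ) := Real.Gamma_pos_of_pos (by linarith)
  have h2 : (0:ℝ) < Real.Gamma ((m:ℝ) - 1/2) := Real.Gamma_pos_of_pos (by linarith)
  have h3 : (0:ℝ) < Real.Gamma ((m:ℝ) + 1/2) := Real.Gamma_pos_of_pos (by linarith)
  have harg : Real.Gamma ((m:ℝ)+1) ^ 2
      / (Real.Gamma (((m:ℝ)+1) - 1/2) * Real.Gamma (((m:ℝ)+1) + 1/2))
      = (Real.Gamma (m:ℝ) ^ 2 / (Real.Gamma ((m:ℝ) - 1/2) * Real.Gamma ((m:ℝ) + 1/2)))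
        * ((m:ℝ)^2 / (((m:ℝ) - 1/2) * ((m:ℝ) + 1/2))) := by
    rw [hG1, hG2, hG3]
    field_simp
  have hcast : ((m+1 : ℕ):ℝ) = (m:ℝ) + 1 := by push_cast; ring
  rw [Sfun, Sfun, afun, hcast, harg, Real.log_mul (by positivity)
    (by have : (0:ℝ) < ((m:ℝ) - 1/2) * ((m:ℝ) + 1/2) := by nlinarith
        positivity)]

lemma Sfun_nonpos {k : ℕ} (hk : 1 ≤ k) : Sfun k ≤ 0 := by
  have hx : (1:ℝ) ≤ (k:ℝ) := by exact_mod_cast hk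
  have hcvx := Real.convexOn_log_Gamma
  have h := hcvx.2 (x := (k:ℝ) - 1/2) (y := (k:ℝ) + 1/2)
    (Set.mem_Ioi.2 (by linarith)) (Set.mem_Ioi.2 (by linarith))
    (by norm_num : (0:ℝ) ≤ 1/2) (by norm_num : (0:ℝ) ≤ 1/2) (by norm_num)
  simp only [smul_eq_mul, Function.comp_apply] at h
  have hmid : (1/2 : ℝ) * ((k:ℝ) - 1/2) + (1/2 : ℝ) * ((k:ℝ) + 1/2) = (k:ℝ) := by ring
  rw [hmid] at h
  rw [Sfun_eq hk]
  linarith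

lemma Sfun_lower {k : ℕ} (hk : 2 ≤ k) :
    -(1/2) * (Real.log (k:ℝ) - Real.log ((k:ℝ) - 1)) ≤ Sfun k := by
  have hx : (2:ℝ) ≤ (k:ℝ) := by exact_mod_cast hk
  have hcvx := Real.convexOn_log_Gamma
  have hA := hcvx.2 (x := (k:ℝ)) (y := (k:ℝ) + 1)
    (Set.mem_Ioi.2 (by linarith)) (Set.mem_Ioi.2 (by linarith))
    (by norm_num : (0:ℝ) ≤ 1/2) (by norm_num : (0:ℝ) ≤ 1/2) (by norm_num)
  have hB := hcvx.2 (x := (k:ℝ) - 1) (y := (k:ℝ))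
    (Set.mem_Ioi.2 (by linarith)) (Set.mem_Ioi.2 (by linarith))
    (by norm_num : (0:ℝ) ≤ 1/2) (by norm_num : (0:ℝ) ≤ 1/2) (by norm_num)
  simp only [smul_eq_mul, Function.comp_apply] at hA hB
  rw [show (1/2 : ℝ) * (k:ℝ) + (1/2 : ℝ) * ((k:ℝ) + 1) = (k:ℝ) + 1/2 by ring] at hA
  rw [show (1/2 : ℝ) * ((k:ℝ) - 1) + (1/2 : ℝ) * (k:ℝ) = (k:ℝ) - 1/2 by ring] at hB
  have hG1 : Real.Gamma ((k:ℝ) + 1) = (k:ℝ) * Real.Gamma (k:ℝ) :=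
    Real.Gamma_add_one (by linarith)
  have hGk : Real.Gamma (k:ℝ) = ((k:ℝ) - 1) * Real.Gamma ((k:ℝ) - 1) := by
    have := Real.Gamma_add_one (s := (k:ℝ) - 1) (ne_of_gt (by linarith))
    rw [show (k:ℝ) - 1 + 1 = (k:ℝ) by ring] at this
    exact this
  have h1 : (0:ℝ) < Real.Gamma (k:ℝ) := Real.Gamma_pos_of_pos (by linarith)
  have h0 : (0:ℝ) < Real.Gamma ((k:ℝ) - 1) := Real.Gamma_pos_of_pos (by linarith)
  have hlog1 : Real.log (Real.Gamma ((k:ℝ) + 1))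
      = Real.log (k:ℝ) + Real.log (Real.Gamma (k:ℝ)) := by
    rw [hG1, Real.log_mul (by linarith) h1.ne']
  have hlog0 : Real.log (Real.Gamma (k:ℝ))
      = Real.log ((k:ℝ) - 1) + Real.log (Real.Gamma ((k:ℝ) - 1)) := by
    rw [hGk, Real.log_mul (by linarith) h0.ne']
  rw [Sfun_eq (by omega)]
  linarith

lemma Sfun_tendsto_zero : Tendsto Sfun atTop (nhds 0) := by
  have hlog : Tendsto (fun k : ℕ => Real.log (k:ℝ) - Real.log ((k:ℝ) - 1)) atTop (nhds 0) := by
    have h1 : Tendsto (fun k : ℕ => ((k:ℝ)) / ((k:ℝ) - 1)) atTop (nhds 1) := by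
      have h2 : Tendsto (fun k : ℕ => (k:ℝ) - 1) atTop atTop :=
        tendsto_atTop_add_const_right _ _ tendsto_natCast_atTop_atTop
      have h3 : Tendsto (fun k : ℕ => 1 + ((k:ℝ) - 1)⁻¹) atTop (nhds 1) := by
        simpa using (tendsto_const_nhds (x := (1:ℝ)) (f := atTop)).add h2.inv_tendsto_atTop
      apply h3.congr'
      filter_upwards [eventually_ge_atTop 2] with k hk
      have hx : (2:ℝ) ≤ (k:ℝ) := by exact_mod_cast hk
      have : (k:ℝ) - 1 ≠ 0 := by linarith
      field_simp
      ring
    have h4 : Tendsto (fun k : ℕ => Real.log (((k:ℝ)) / ((k:ℝ) - 1))) atTop (nhds 0) := by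
      have := (Real.continuousAt_log (by norm_num : (1:ℝ) ≠ 0)).tendsto.comp h1
      simpa [Function.comp_def] using this
    apply h4.congr'
    filter_upwards [eventually_ge_atTop 2] with k hk
    have hx : (2:ℝ) ≤ (k:ℝ) := by exact_mod_cast hk
    rw [Real.log_div (by linarith) (by linarith)]
  have hub : ∀ᶠ k : ℕ in atTop, Sfun k ≤ 0 := by
    filter_upwards [eventually_ge_atTop 1] with k hk; exact Sfun_nonpos hk
  have hlb : ∀ᶠ k : ℕ in atTop,
      -(1/2) * (Real.log (k:ℝ) - Real.log ((k:ℝ) - 1)) ≤ Sfun k := by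
    filter_upwards [eventually_ge_atTop 2] with k hk; exact Sfun_lower hk
  have hlow : Tendsto (fun k : ℕ => -(1/2) * (Real.log (k:ℝ) - Real.log ((k:ℝ) - 1)))
      atTop (nhds 0) := by
    simpa using hlog.const_mul (-(1/2) : ℝ)
  exact tendsto_of_tendsto_of_tendsto_of_le_of_le' hlow tendsto_const_nhds hlb hub

lemma hasSum_afun {k : ℕ} (hk : 1 ≤ k) : HasSum (fun j : ℕ => afun (k + j)) (-Sfun k) := by
  have hpartial : ∀ m : ℕ, Sfun (k + m) = Sfun k + ∑ j ∈ Finset.range m, afun (k + j) := by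
    intro m
    induction m with
    | zero => simp
    | succ n ih =>
      rw [show k + (n+1) = (k+n) + 1 by ring, Sfun_succ (by omega), ih,
        Finset.sum_range_succ]
      ring
  rw [hasSum_iff_tendsto_nat_of_nonneg (fun j => afun_nonneg (by omega))]
  have hS : Tendsto (fun m : ℕ => Sfun (k + m)) atTop (nhds 0) :=
    (Sfun_tendsto_zero.comp (tendsto_add_atTop_nat k)).congr
      (fun m => congrArg Sfun (Nat.add_comm m k))
  have : Tendsto (fun m : ℕ => Sfun (k + m) - Sfun k) atTop (nhds (0 - Sfun k)) :=
    hS.sub tendsto_const_nhds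
  simp only [zero_sub] at this
  apply this.congr
  intro m
  rw [hpartial m]
  ring


-- assume previous lemmas present; re-declare axioms for speed? no, paste needed ones:
noncomputable def Ffun (m : ℕ) : ℝ → ℝ := fun t =>
  (Real.exp (-(((m:ℝ) - 1/2) * t)) + Real.exp (-(((m:ℝ) + 1/2) * t))
    - 2 * Real.exp (-((m:ℝ) * t))) / t

noncomputable def gfun (k : ℕ) : ℝ → ℝ := fun t =>
  Real.exp (-((k:ℝ) * t)) * ((Real.exp (t/2) + Real.exp (-(t/2)) - 2) / t)
    * (1 - Real.exp (-t))⁻¹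

lemma C_nonneg (t : ℝ) : 0 ≤ Real.exp (t/2) + Real.exp (-(t/2)) - 2 := by
  rw [Real.exp_neg]
  have h1 := Real.exp_pos (t/2)
  have h2 : Real.exp (t/2) * (Real.exp (t/2))⁻¹ = 1 := mul_inv_cancel₀ h1.ne'
  nlinarith [sq_nonneg (Real.exp (t/2) - 1)]

lemma Ffun_eq (m : ℕ) (t : ℝ) :
    Ffun m t = Real.exp (-((m:ℝ) * t)) * ((Real.exp (t/2) + Real.exp (-(t/2)) - 2) / t) := by
  unfold Ffun
  rw [show -(((m:ℝ) - 1/2) * t) = -((m:ℝ) * t) + t/2 by ring,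
      show -(((m:ℝ) + 1/2) * t) = -((m:ℝ) * t) + -(t/2) by ring,
      Real.exp_add, Real.exp_add]
  ring

lemma Ffun_nonneg (m : ℕ) {t : ℝ} (ht : 0 < t) : 0 ≤ Ffun m t := by
  rw [Ffun_eq]
  have := C_nonneg t
  positivity

lemma afun_integral {m : ℕ} (hm : 1 ≤ m) :
    IntegrableOn (Ffun m) (Set.Ioi 0) ∧ ∫ t in Set.Ioi (0:ℝ), Ffun m t = afun m := by
  have hx : (1:ℝ) ≤ (m:ℝ) := by exact_mod_cast hm
  have h1 := frullani (c := (m:ℝ) - 1/2) (d := (m:ℝ)) (by linarith) (by linarith)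
  have h2 := frullani (c := (m:ℝ)) (d := (m:ℝ) + 1/2) (by linarith) (by linarith)
  have hfun : Ffun m = fun t =>
      (Real.exp (-(((m:ℝ) - 1/2) * t)) - Real.exp (-((m:ℝ) * t))) / t
      - (Real.exp (-((m:ℝ) * t)) - Real.exp (-(((m:ℝ) + 1/2) * t))) / t := by
    funext t; unfold Ffun; ring
  constructor
  · rw [hfun]; exact h1.1.sub h2.1
  · rw [hfun, MeasureTheory.integral_sub h1.1 h2.1, h1.2, h2.2, afun_eq hm]
    ring

lemma tsum_Ffun {k : ℕ} {t : ℝ} (ht : 0 < t) :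
    ∑' j : ℕ, Ffun (k + j) t = gfun k t := by
  simp only [Ffun_eq]
  have h2 : ∀ j : ℕ, Real.exp (-((((k+j):ℕ):ℝ) * t))
      = Real.exp (-((k:ℝ) * t)) * (Real.exp (-t))^j := by
    intro j
    rw [← Real.exp_nat_mul, ← Real.exp_add]
    congr 1; push_cast; ring
  simp only [h2]
  rw [tsum_mul_right, tsum_mul_left,
    tsum_geometric_of_lt_one (le_of_lt (Real.exp_pos _))
      (by calc Real.exp (-t) < Real.exp 0 := Real.exp_lt_exp.2 (by linarith)
            _ = 1 := Real.exp_zero)]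
  unfold gfun
  ring

lemma gfun_nonneg (k : ℕ) {t : ℝ} (ht : 0 < t) : 0 ≤ gfun k t := by
  unfold gfun
  have h1 := C_nonneg t
  have h2 : Real.exp (-t) < 1 := by
    calc Real.exp (-t) < Real.exp 0 := Real.exp_lt_exp.2 (by linarith)
      _ = 1 := Real.exp_zero
  have h3 : 0 < 1 - Real.exp (-t) := by linarith
  positivity

lemma key_ineq {t : ℝ} (ht : 0 < t) :
    Real.exp (-t) * (Real.exp (t/2) + Real.exp (-(t/2)) - 2) * 4
      ≤ t * Real.exp (-(t/2)) * (1 - Real.exp (-t)) := by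
  have hs := my_sinh_le_mul_cosh (x := t/4) (by linarith)
  rw [Real.sinh_eq, Real.cosh_eq] at hs
  have e2 : Real.exp (t/2) = Real.exp (t/4) * Real.exp (t/4) := by
    rw [← Real.exp_add]; congr 1; ring
  have em2 : Real.exp (-(t/2)) = Real.exp (-(t/4)) * Real.exp (-(t/4)) := by
    rw [← Real.exp_add]; congr 1; ring
  have emt : Real.exp (-t)
      = Real.exp (-(t/4)) * Real.exp (-(t/4)) * Real.exp (-(t/4)) * Real.exp (-(t/4)) := by
    rw [← Real.exp_add, ← Real.exp_add, ← Real.exp_add]; congr 1; ring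
  have hyu : Real.exp (t/4) * Real.exp (-(t/4)) = 1 := by rw [← Real.exp_add]; simp
  have hy1 : 1 ≤ Real.exp (t/4) := Real.one_le_exp (by linarith)
  have hu0 : 0 < Real.exp (-(t/4)) := Real.exp_pos _
  have hyu' : Real.exp (-(t/4)) ≤ Real.exp (t/4) := Real.exp_le_exp.2 (by linarith)
  rw [e2, em2, emt]
  set y := Real.exp (t/4)
  set u := Real.exp (-(t/4))
  have h3 : (y - u) * (y - u) ≤ (t/4 * (y + u)) * (y - u) := by
    apply mul_le_mul_of_nonneg_right _ (by linarith)
    linarith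
  have h4 := mul_le_mul_of_nonneg_left h3
    (show (0:ℝ) ≤ 4*(u*u*u*u) by positivity)
  have key2 : t * (u*u) * (1 - u*u*u*u) = 4*(u*u*u*u)*((t/4 * (y + u)) * (y - u)) := by
    linear_combination (-(t*(u*u)*(y*u+1))) * hyu
  have key3 : 4*(u*u*u*u)*((y - u) * (y - u)) = u*u*u*u * (y*y + u*u - 2) * 4 := by
    linear_combination (-(8*(u*u*u*u))) * hyu
  linarith [h4]

lemma gfun_le {k : ℕ} (hk : 1 ≤ k) {t : ℝ} (ht : 0 < t) :
    gfun k t ≤ (1/4) * Real.exp (-(2⁻¹ * t)) := by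
  have hx : (1:ℝ) ≤ (k:ℝ) := by exact_mod_cast hk
  have hC := C_nonneg t
  have h2 : Real.exp (-t) < 1 := by
    calc Real.exp (-t) < Real.exp 0 := Real.exp_lt_exp.2 (by linarith)
      _ = 1 := Real.exp_zero
  have hD : 0 < 1 - Real.exp (-t) := by linarith
  have hA : Real.exp (-((k:ℝ) * t)) ≤ Real.exp (-t) := Real.exp_le_exp.2 (by nlinarith)
  have hhalf : Real.exp (-(2⁻¹ * t)) = Real.exp (-(t/2)) := by congr 1; ring
  rw [hhalf]
  have key := key_ineq ht
  have step1 : gfun k t ≤ Real.exp (-t) * ((Real.exp (t/2) + Real.exp (-(t/2)) - 2) / t)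
      * (1 - Real.exp (-t))⁻¹ := by
    unfold gfun
    have hfac : 0 ≤ (Real.exp (t/2) + Real.exp (-(t/2)) - 2) / t * (1 - Real.exp (-t))⁻¹ := by
      positivity
    calc Real.exp (-((k:ℝ) * t)) * ((Real.exp (t/2) + Real.exp (-(t/2)) - 2) / t)
          * (1 - Real.exp (-t))⁻¹
        = Real.exp (-((k:ℝ) * t)) * (((Real.exp (t/2) + Real.exp (-(t/2)) - 2) / t)
          * (1 - Real.exp (-t))⁻¹) := by ring
      _ ≤ Real.exp (-t) * (((Real.exp (t/2) + Real.exp (-(t/2)) - 2) / t)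
          * (1 - Real.exp (-t))⁻¹) := mul_le_mul_of_nonneg_right hA hfac
      _ = Real.exp (-t) * ((Real.exp (t/2) + Real.exp (-(t/2)) - 2) / t)
          * (1 - Real.exp (-t))⁻¹ := by ring
  refine step1.trans ?_
  have hrw : Real.exp (-t) * ((Real.exp (t/2) + Real.exp (-(t/2)) - 2) / t)
      * (1 - Real.exp (-t))⁻¹
      = (Real.exp (-t) * (Real.exp (t/2) + Real.exp (-(t/2)) - 2)) / (t * (1 - Real.exp (-t))) := by
    field_simp
  rw [hrw, div_le_iff₀ (by positivity)]
  nlinarith [key]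

lemma gfun_continuousOn (k : ℕ) : ContinuousOn (gfun k) (Set.Ioi 0) := by
  unfold gfun
  apply ContinuousOn.mul
  apply ContinuousOn.mul
  · exact (Real.continuous_exp.comp (by fun_prop)).continuousOn
  · apply ContinuousOn.div
    · fun_prop
    · fun_prop
    · intro t ht; exact ne_of_gt ht
  · apply ContinuousOn.inv₀
    · fun_prop
    · intro t ht
      have h2 : Real.exp (-t) < 1 := by
        calc Real.exp (-t) < Real.exp 0 := Real.exp_lt_exp.2 (by simpa using ht)
          _ = 1 := Real.exp_zero
      intro h; rw [sub_eq_zero] at h; rw [← h] at h2; exact lt_irrefl _ h2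

lemma gfun_integrableOn {k : ℕ} (hk : 1 ≤ k) : IntegrableOn (gfun k) (Set.Ioi 0) := by
  apply Integrable.mono ((integrableOn_exp_neg_mul (c := (2:ℝ)⁻¹) (by norm_num)).const_mul (1/4))
  · exact (gfun_continuousOn k).aestronglyMeasurable measurableSet_Ioi
  · rw [ae_restrict_iff' measurableSet_Ioi]
    filter_upwards with t ht
    rw [Real.norm_of_nonneg (gfun_nonneg k ht), Real.norm_of_nonneg (by positivity)]
    exact gfun_le hk ht

lemma Sfun_integral {k : ℕ} (hk : 1 ≤ k) :
    ∫ t in Set.Ioi (0:ℝ), gfun k t = -Sfun k := by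
  have hnorm : ∀ j : ℕ, (∫ t in Set.Ioi (0:ℝ), ‖Ffun (k+j) t‖) = afun (k+j) := by
    intro j
    rw [← (afun_integral (m := k+j) (by omega)).2]
    apply setIntegral_congr_fun measurableSet_Ioi
    intro t ht
    exact Real.norm_of_nonneg (Ffun_nonneg _ ht)
  have hsum : Summable (fun j : ℕ => ∫ t in Set.Ioi (0:ℝ), ‖Ffun (k+j) t‖) := by
    simp only [hnorm]
    exact (hasSum_afun hk).summable
  have hint : ∀ j : ℕ, Integrable (Ffun (k+j)) (volume.restrict (Set.Ioi 0)) :=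
    fun j => (afun_integral (by omega)).1
  have hswap := MeasureTheory.integral_tsum_of_summable_integral_norm hint hsum
  have hltsum : ∑' j : ℕ, (∫ t in Set.Ioi (0:ℝ), Ffun (k+j) t) = -Sfun k := by
    have : ∀ j : ℕ, (∫ t in Set.Ioi (0:ℝ), Ffun (k+j) t) = afun (k+j) :=
      fun j => (afun_integral (by omega)).2
    simp only [this]
    exact (hasSum_afun hk).tsum_eq
  rw [← hltsum, hswap]
  apply setIntegral_congr_fun measurableSet_Ioi
  intro t ht
  exact (tsum_Ffun ht).symm


noncomputable def Ghat (N : ℕ) : ℝ → ℝ := fun t =>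
  (1/4) * (1 - (Real.exp (-t))^N) / (t * Real.cosh (t/4)^2)

lemma cosh_key {t : ℝ} :
    4 * (Real.exp (-t) * (Real.exp (t/2) + Real.exp (-(t/2)) - 2) * Real.cosh (t/4)^2)
      = (1 - Real.exp (-t))^2 := by
  have e2 : Real.exp (t/2) = Real.exp (t/4) * Real.exp (t/4) := by
    rw [← Real.exp_add]; congr 1; ring
  have em2 : Real.exp (-(t/2)) = Real.exp (-(t/4)) * Real.exp (-(t/4)) := by
    rw [← Real.exp_add]; congr 1; ring
  have emt : Real.exp (-t)
      = Real.exp (-(t/4)) * Real.exp (-(t/4)) * Real.exp (-(t/4)) * Real.exp (-(t/4)) := by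
    rw [← Real.exp_add, ← Real.exp_add, ← Real.exp_add]; congr 1; ring
  have hyu : Real.exp (t/4) * Real.exp (-(t/4)) = 1 := by rw [← Real.exp_add]; simp
  rw [Real.cosh_eq, e2, em2, emt]
  set y := Real.exp (t/4)
  set u := Real.exp (-(t/4))
  linear_combination (2*(u*u*u*u)*(y+u)^2 + ((y*u)^2 + 1 - 2*(u*u*u*u))*(y*u+1)) * hyu

lemma sum_gfun (N : ℕ) {t : ℝ} (ht : 0 < t) :
    ∑ k ∈ Finset.Icc 1 N, gfun k t = Ghat N t := by
  have hx1 : Real.exp (-t) < 1 := by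
    calc Real.exp (-t) < Real.exp 0 := Real.exp_lt_exp.2 (by linarith)
      _ = 1 := Real.exp_zero
  have hD : 0 < 1 - Real.exp (-t) := by linarith
  have hsum : ∑ k ∈ Finset.Icc 1 N, gfun k t
      = (∑ k ∈ Finset.Icc 1 N, (Real.exp (-t))^k)
        * ((Real.exp (t/2) + Real.exp (-(t/2)) - 2) / t * (1 - Real.exp (-t))⁻¹) := by
    rw [Finset.sum_mul]
    apply Finset.sum_congr rfl
    intro k _
    unfold gfun
    rw [show -((k:ℝ) * t) = (k:ℕ) * (-t) by push_cast; ring, Real.exp_nat_mul]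
    ring
  have hgeom : ∀ M : ℕ, (1 - Real.exp (-t)) * ∑ k ∈ Finset.Icc 1 M, (Real.exp (-t))^k
      = Real.exp (-t) * (1 - (Real.exp (-t))^M) := by
    intro M
    induction M with
    | zero => simp
    | succ n ih =>
      rw [Finset.sum_Icc_succ_top (by omega), mul_add, ih, pow_succ]
      ring
  have hS : ∑ k ∈ Finset.Icc 1 N, (Real.exp (-t))^k
      = Real.exp (-t) * (1 - (Real.exp (-t))^N) / (1 - Real.exp (-t)) := by
    rw [eq_div_iff hD.ne']
    have := hgeom N
    linarith
  rw [hsum, hS]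
  have hcosh : (0:ℝ) < Real.cosh (t/4) := Real.cosh_pos _
  unfold Ghat
  have key := cosh_key (t := t)
  field_simp
  linear_combination (1-Real.exp (-t)^N) * key

noncomputable def Ahat (N : ℕ) : ℝ → ℝ := fun s =>
  (1 - (Real.exp (-(4*s)))^N) / (s * Real.cosh s^2)

lemma integral_Ghat (N : ℕ) :
    ∫ t in Set.Ioi (0:ℝ), Ghat N t = (1/4) * ∫ s in Set.Ioi (0:ℝ), Ahat N s := by
  have h := integral_comp_mul_left_Ioi (Ghat N) 0 (by norm_num : (0:ℝ) < 4)
  simp only [mul_zero] at h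
  have hpt : ∀ s ∈ Set.Ioi (0:ℝ), Ghat N (4*s) = (1/16) * Ahat N s := by
    intro s hs
    have hs0 : (0:ℝ) < s := hs
    unfold Ghat Ahat
    rw [show (4*s)/4 = s by ring]
    have hc : (0:ℝ) < Real.cosh s := Real.cosh_pos _
    rw [show 4*s*Real.cosh s^2 = 4*(s*Real.cosh s^2) by ring, div_mul_eq_div_div_swap,
      mul_div_assoc, mul_div_assoc]
    ring
  rw [setIntegral_congr_fun measurableSet_Ioi hpt] at h
  rw [MeasureTheory.integral_const_mul, smul_eq_mul] at h
  linarith [h]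

noncomputable def qfun : ℝ → ℝ := fun t => (1/t) * (1/Real.cosh t^2 - Real.exp (-4*t))
noncomputable def rfun (N : ℕ) : ℝ → ℝ := fun s =>
  (1/s) * (Real.exp (-(4*s)))^N * (1 - 1/Real.cosh s^2)

lemma cosh_le_exp' {t : ℝ} (ht : 0 ≤ t) : Real.cosh t ≤ Real.exp t := by
  rw [Real.cosh_eq]
  have := Real.exp_le_exp.2 (show -t ≤ t by linarith)
  linarith

lemma exp_le_two_cosh (t : ℝ) : Real.exp t ≤ 2 * Real.cosh t := by
  rw [Real.cosh_eq]
  have := Real.exp_pos (-t)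
  linarith

lemma qfun_nonneg {t : ℝ} (ht : 0 < t) : 0 ≤ qfun t := by
  unfold qfun
  have hc : (0:ℝ) < Real.cosh t := Real.cosh_pos _
  have h1 : Real.cosh t ≤ Real.exp t := cosh_le_exp' ht.le
  have h2 : Real.exp (-4*t) * (Real.exp t * Real.exp t) = Real.exp (-2*t) := by
    rw [← Real.exp_add, ← Real.exp_add]; congr 1; ring
  have h3 : Real.exp (-2*t) ≤ 1 := by
    have := Real.exp_le_exp.2 (show (-2*t : ℝ) ≤ 0 by linarith)
    simpa using this
  have key : Real.exp (-4*t) ≤ 1/Real.cosh t^2 := by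
    rw [le_div_iff₀ (by positivity)]
    nlinarith [mul_le_mul_of_nonneg_left (mul_le_mul h1 h1 hc.le (Real.exp_pos t).le)
      (Real.exp_pos (-4*t)).le, h2, h3]
  have : 0 ≤ 1/Real.cosh t^2 - Real.exp (-4*t) := by linarith
  positivity

lemma qfun_le_Ioc {t : ℝ} (ht : 0 < t) : qfun t ≤ 4 := by
  unfold qfun
  have hc : (1:ℝ) ≤ Real.cosh t := Real.one_le_cosh t
  have h1 : 1/Real.cosh t^2 ≤ 1 := by
    rw [div_le_one (by positivity)]; nlinarith
  have h2 : 1 - Real.exp (-4*t) ≤ 4*t := by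
    have := Real.add_one_le_exp (-4*t)
    linarith
  have h3 : 1/Real.cosh t^2 - Real.exp (-4*t) ≤ 4*t := by linarith
  calc (1/t) * (1/Real.cosh t^2 - Real.exp (-4*t)) ≤ (1/t) * (4*t) :=
        mul_le_mul_of_nonneg_left h3 (by positivity)
    _ = 4 := by field_simp

lemma qfun_le_Ioi1 {t : ℝ} (ht : 1 ≤ t) : qfun t ≤ 4 * Real.exp (-(2*t)) := by
  have ht0 : (0:ℝ) < t := by linarith
  unfold qfun
  have hc : (0:ℝ) < Real.cosh t := Real.cosh_pos _
  have hE : 0 < Real.exp (-4*t) := Real.exp_pos _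
  have h1 : 1/Real.cosh t^2 ≤ 4 * Real.exp (-(2*t)) := by
    rw [div_le_iff₀ (by positivity)]
    have h2 := exp_le_two_cosh t
    have h3 : Real.exp (-(2*t)) * (Real.exp t * Real.exp t) = 1 := by
      rw [← Real.exp_add, ← Real.exp_add, show -(2*t) + (t + t) = (0:ℝ) by ring, Real.exp_zero]
    nlinarith [Real.exp_pos t, Real.exp_pos (-(2*t)),
      mul_le_mul_of_nonneg_left (mul_le_mul h2 h2 (Real.exp_pos t).le (by positivity))
        (Real.exp_pos (-(2*t))).le]
  have h4 : (1/t) * (1/Real.cosh t^2 - Real.exp (-4*t)) ≤ 1 * (1/Real.cosh t^2) := by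
    apply mul_le_mul (by rw [div_le_one ht0]; exact ht) (by linarith) _ (by norm_num)
    have : Real.exp (-4*t) ≤ 1/Real.cosh t^2 := by
      have h5 : Real.cosh t ≤ Real.exp t := cosh_le_exp' ht0.le
      rw [le_div_iff₀ (by positivity)]
      have h6 : Real.exp (-4*t) * (Real.exp t * Real.exp t) = Real.exp (-2*t) := by
        rw [← Real.exp_add, ← Real.exp_add]; congr 1; ring
      have h7 : Real.exp (-2*t) ≤ 1 := by
        have := Real.exp_le_exp.2 (show (-2*t : ℝ) ≤ 0 by linarith)
        simpa using this
      nlinarith [mul_le_mul_of_nonneg_left (mul_le_mul h5 h5 hc.le (Real.exp_pos t).le)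
        (Real.exp_pos (-4*t)).le, h6, h7]
    linarith
  linarith [h4, h1]

lemma qfun_measurable : Measurable qfun := by
  unfold qfun
  exact (measurable_const.div measurable_id).mul
    ((measurable_const.div (Real.continuous_cosh.measurable.pow_const 2)).sub
      (Real.measurable_exp.comp (measurable_id.const_mul (-4))))

lemma qfun_integrableOn : IntegrableOn qfun (Set.Ioi 0) := by
  rw [← Set.Ioc_union_Ioi_eq_Ioi (zero_le_one (α := ℝ)), integrableOn_union]
  constructor
  · apply Measure.integrableOn_of_bounded (M := 4) measure_Ioc_lt_top.ne
      qfun_measurable.aestronglyMeasurable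
    rw [ae_restrict_iff' measurableSet_Ioc]
    filter_upwards with t ht
    rw [Real.norm_of_nonneg (qfun_nonneg ht.1)]
    exact qfun_le_Ioc ht.1
  · apply Integrable.mono (((integrableOn_exp_neg_mul (by norm_num : (0:ℝ) < 2)).mono_set
      (Set.Ioi_subset_Ioi zero_le_one)).const_mul 4)
    · exact qfun_measurable.aestronglyMeasurable
    · rw [ae_restrict_iff' measurableSet_Ioi]
      filter_upwards with t ht
      have ht1 : (1:ℝ) ≤ t := le_of_lt ht
      rw [Real.norm_of_nonneg (qfun_nonneg (by linarith)),
        Real.norm_of_nonneg (by positivity)]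
      exact qfun_le_Ioi1 ht1

lemma rfun_nonneg (N : ℕ) {s : ℝ} (hs : 0 < s) : 0 ≤ rfun N s := by
  unfold rfun
  have hc : (1:ℝ) ≤ Real.cosh s := Real.one_le_cosh s
  have h1 : 1/Real.cosh s^2 ≤ 1 := by
    rw [div_le_one (by positivity)]; nlinarith
  have h2 : (0:ℝ) ≤ 1 - 1/Real.cosh s^2 := by linarith
  positivity

lemma rfun_le {N : ℕ} (hN : 1 ≤ N) {s : ℝ} (hs : 0 < s) :
    rfun N s ≤ (1/(2*(N:ℝ))) * Real.exp (-(2*s)) := by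
  have hNR : (1:ℝ) ≤ (N:ℝ) := by exact_mod_cast hN
  have hc : (0:ℝ) < Real.cosh s := Real.cosh_pos _
  have hw : 1 - 1/Real.cosh s^2 ≤ s^2 := by
    have hsinh := my_sinh_le_mul_cosh hs.le
    have hs0 : 0 ≤ Real.sinh s := by
      rw [← Real.sinh_zero]
      exact (Real.sinh_le_sinh).2 hs.le
    have hsq := Real.cosh_sq s
    have h1 : Real.cosh s^2 - 1 ≤ s^2 * Real.cosh s^2 := by nlinarith
    have heq : 1 - 1/Real.cosh s^2 = (Real.cosh s^2 - 1)/Real.cosh s^2 := by field_simp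
    rw [heq, div_le_iff₀ (by positivity)]
    linarith
  have hP : (Real.exp (-(4*s)))^N = Real.exp (-(4*(N:ℝ)*s)) := by
    rw [← Real.exp_nat_mul]; congr 1; ring
  have step1 : rfun N s ≤ (1/s) * (Real.exp (-(4*s)))^N * s^2 := by
    unfold rfun
    apply mul_le_mul_of_nonneg_left hw (by positivity)
  have step2 : (1/s) * (Real.exp (-(4*s)))^N * s^2 = s * Real.exp (-(4*(N:ℝ)*s)) := by
    rw [hP]; field_simp
  have h1 : 2*(N:ℝ)*s ≤ Real.exp (2*(N:ℝ)*s) := by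
    nlinarith [Real.add_one_le_exp (2*(N:ℝ)*s)]
  have h2 : Real.exp (2*(N:ℝ)*s) * Real.exp (-(4*(N:ℝ)*s)) = Real.exp (-(2*(N:ℝ)*s)) := by
    rw [← Real.exp_add]; congr 1; ring
  have h3 : Real.exp (-(2*(N:ℝ)*s)) ≤ Real.exp (-(2*s)) :=
    Real.exp_le_exp.2 (by nlinarith)
  have step3 : s * Real.exp (-(4*(N:ℝ)*s)) ≤ (1/(2*(N:ℝ))) * Real.exp (-(2*s)) := by
    have hs' : s ≤ Real.exp (2*(N:ℝ)*s) / (2*(N:ℝ)) := by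
      rw [le_div_iff₀ (by positivity)]
      nlinarith
    calc s * Real.exp (-(4*(N:ℝ)*s))
        ≤ (Real.exp (2*(N:ℝ)*s) / (2*(N:ℝ))) * Real.exp (-(4*(N:ℝ)*s)) :=
          mul_le_mul_of_nonneg_right hs' (Real.exp_pos _).le
      _ = (1/(2*(N:ℝ))) * Real.exp (-(2*(N:ℝ)*s)) := by
          rw [div_mul_eq_mul_div, ← h2]; ring
      _ ≤ (1/(2*(N:ℝ))) * Real.exp (-(2*s)) := by
          apply mul_le_mul_of_nonneg_left h3 (by positivity)
  calc rfun N s ≤ (1/s) * (Real.exp (-(4*s)))^N * s^2 := step1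
    _ = s * Real.exp (-(4*(N:ℝ)*s)) := step2
    _ ≤ (1/(2*(N:ℝ))) * Real.exp (-(2*s)) := step3

lemma rfun_measurable (N : ℕ) : Measurable (rfun N) := by
  unfold rfun
  exact ((measurable_const.div measurable_id).mul
    ((Real.measurable_exp.comp ((measurable_id.const_mul 4).neg)).pow_const N)).mul
    (measurable_const.sub (measurable_const.div (Real.continuous_cosh.measurable.pow_const 2)))

lemma rfun_integrableOn {N : ℕ} (hN : 1 ≤ N) : IntegrableOn (rfun N) (Set.Ioi 0) := by
  have hNR : (1:ℝ) ≤ (N:ℝ) := by exact_mod_cast hN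
  apply Integrable.mono ((integrableOn_exp_neg_mul (by norm_num : (0:ℝ) < 2)).const_mul
    (1/(2*(N:ℝ))))
  · exact (rfun_measurable N).aestronglyMeasurable
  · rw [ae_restrict_iff' measurableSet_Ioi]
    filter_upwards with s hs
    rw [Real.norm_of_nonneg (rfun_nonneg N hs), Real.norm_of_nonneg (by positivity)]
    exact rfun_le hN hs

lemma rfun_integral_bound {N : ℕ} (hN : 1 ≤ N) :
    0 ≤ ∫ s in Set.Ioi (0:ℝ), rfun N s ∧
    (∫ s in Set.Ioi (0:ℝ), rfun N s) ≤ 1/(4*(N:ℝ)) := by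
  have hNR : (1:ℝ) ≤ (N:ℝ) := by exact_mod_cast hN
  constructor
  · apply setIntegral_nonneg measurableSet_Ioi
    intro s hs; exact rfun_nonneg N hs
  · have h1 : (∫ s in Set.Ioi (0:ℝ), rfun N s)
        ≤ ∫ s in Set.Ioi (0:ℝ), (1/(2*(N:ℝ))) * Real.exp (-(2*s)) := by
      apply setIntegral_mono_on (rfun_integrableOn hN)
        ((integrableOn_exp_neg_mul (by norm_num : (0:ℝ) < 2)).const_mul (1/(2*(N:ℝ))))
        measurableSet_Ioi
      intro s hs; exact rfun_le hN hs
    have h2 : (∫ s in Set.Ioi (0:ℝ), (1/(2*(N:ℝ))) * Real.exp (-(2*s)))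
        = (1/(2*(N:ℝ))) * (1/2) := by
      rw [MeasureTheory.integral_const_mul, integral_exp_neg_mul (by norm_num : (0:ℝ) < 2)]
    rw [h2] at h1
    calc (∫ s in Set.Ioi (0:ℝ), rfun N s) ≤ (1/(2*(N:ℝ))) * (1/2) := h1
      _ = 1/(4*(N:ℝ)) := by ring

/-- First-order asymptotics of `φ_N = -∑_{k=1}^N log(Γ(k)²/(Γ(k-1/2)Γ(k+1/2)))`:
the improper integral `∫_0^∞ (1/t)(e^{-4t} - cosh⁻²t) dt` converges and
`φ_N - (1/4) log N` tends to `-(1/4)` times this integral. -/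
theorem stmt15 (φ : ℕ → ℝ)
    (hφ : ∀ N : ℕ, φ N = -∑ k ∈ Finset.Icc 1 N,
      Real.log (Real.Gamma (k : ℝ) ^ 2 /
        (Real.Gamma ((k : ℝ) - 1 / 2) * Real.Gamma ((k : ℝ) + 1 / 2)))) :
    MeasureTheory.IntegrableOn
        (fun t : ℝ => (1 / t) * (Real.exp (-4 * t) - 1 / Real.cosh t ^ 2)) (Set.Ioi 0) ∧
      Tendsto (fun N : ℕ => φ N - (1 / 4) * Real.log N) atTop
        (nhds (-(1 / 4) *
          ∫ t in Set.Ioi (0 : ℝ), (1 / t) * (Real.exp (-4 * t) - 1 / Real.cosh t ^ 2))) := by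
  have htarget : (fun t : ℝ => (1 / t) * (Real.exp (-4 * t) - 1 / Real.cosh t ^ 2))
      = fun t => -(qfun t) := by
    funext t; unfold qfun; ring
  refine ⟨by rw [htarget]; exact qfun_integrableOn.neg, ?_⟩
  set I := ∫ t in Set.Ioi (0:ℝ), (1 / t) * (Real.exp (-4 * t) - 1 / Real.cosh t ^ 2) with hIdef
  have hI : I = - ∫ t in Set.Ioi (0:ℝ), qfun t := by
    rw [hIdef, htarget, MeasureTheory.integral_neg]
  have hphi : ∀ N : ℕ, 1 ≤ N →
      φ N - (1/4) * Real.log N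
        = -(1/4) * I + (1/4) * ∫ s in Set.Ioi (0:ℝ), rfun N s := by
    intro N hN
    have hNR : (1:ℝ) ≤ (N:ℝ) := by exact_mod_cast hN
    have h0 : φ N = ∑ k ∈ Finset.Icc 1 N, -Sfun k := by
      rw [hφ N, ← Finset.sum_neg_distrib]
      rfl
    have h1 : ∫ t in Set.Ioi (0:ℝ), ∑ k ∈ Finset.Icc 1 N, gfun k t
        = ∑ k ∈ Finset.Icc 1 N, -Sfun k := by
      rw [MeasureTheory.integral_finset_sum _
        (fun k hk => gfun_integrableOn (Finset.mem_Icc.1 hk).1)]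
      exact Finset.sum_congr rfl (fun k hk => Sfun_integral (Finset.mem_Icc.1 hk).1)
    have h2 : ∫ t in Set.Ioi (0:ℝ), ∑ k ∈ Finset.Icc 1 N, gfun k t
        = ∫ t in Set.Ioi (0:ℝ), Ghat N t :=
      setIntegral_congr_fun measurableSet_Ioi (fun t ht => sum_gfun N ht)
    have hphiA : φ N = (1/4) * ∫ s in Set.Ioi (0:ℝ), Ahat N s := by
      rw [h0, ← h1, h2, integral_Ghat]
    have hB := frullani (c := 4) (d := 4*(N:ℝ)) (by norm_num) (by nlinarith)
    have hBval : ∫ t in Set.Ioi (0:ℝ),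
        (Real.exp (-(4 * t)) - Real.exp (-((4*(N:ℝ)) * t))) / t = Real.log N := by
      rw [hB.2, Real.log_mul (by norm_num) (by exact_mod_cast Nat.one_le_iff_ne_zero.1 hN)]
      ring
    have hsplit : ∀ s ∈ Set.Ioi (0:ℝ), Ahat N s
        = qfun s + rfun N s + (Real.exp (-(4 * s)) - Real.exp (-((4*(N:ℝ)) * s))) / s := by
      intro s hs
      have hs0 : (0:ℝ) < s := hs
      have hc : (0:ℝ) < Real.cosh s := Real.cosh_pos _
      have hP : (Real.exp (-(4*s)))^N = Real.exp (-((4*(N:ℝ)) * s)) := by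
        rw [← Real.exp_nat_mul]; congr 1; ring
      unfold Ahat qfun rfun
      rw [hP, show (-4*s : ℝ) = -(4*s) by ring]
      field_simp
      ring
    have hadd1 : IntegrableOn (fun s => qfun s + rfun N s) (Set.Ioi 0) :=
      qfun_integrableOn.add (rfun_integrableOn hN)
    have e1 : ∫ s in Set.Ioi (0:ℝ),
          ((fun s => qfun s + rfun N s) s
            + (fun s => (Real.exp (-(4 * s)) - Real.exp (-((4*(N:ℝ)) * s))) / s) s)
        = (∫ s in Set.Ioi (0:ℝ), qfun s + rfun N s)
          + ∫ s in Set.Ioi (0:ℝ), (Real.exp (-(4 * s)) - Real.exp (-((4*(N:ℝ)) * s))) / s :=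
      MeasureTheory.integral_add hadd1 hB.1
    have e2 : ∫ s in Set.Ioi (0:ℝ), (qfun s + rfun N s)
        = (∫ s in Set.Ioi (0:ℝ), qfun s) + ∫ s in Set.Ioi (0:ℝ), rfun N s :=
      MeasureTheory.integral_add qfun_integrableOn (rfun_integrableOn hN)
    have hAint : ∫ s in Set.Ioi (0:ℝ), Ahat N s
        = (∫ s in Set.Ioi (0:ℝ), qfun s) + (∫ s in Set.Ioi (0:ℝ), rfun N s)
          + Real.log N := by
      rw [setIntegral_congr_fun measurableSet_Ioi hsplit]
      rw [show (∫ s in Set.Ioi (0:ℝ),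
          (qfun s + rfun N s + (Real.exp (-(4 * s)) - Real.exp (-((4*(N:ℝ)) * s))) / s))
          = ∫ s in Set.Ioi (0:ℝ),
          ((fun s => qfun s + rfun N s) s
            + (fun s => (Real.exp (-(4 * s)) - Real.exp (-((4*(N:ℝ)) * s))) / s) s) from rfl]
      rw [e1, e2, hBval]
    have hq : (∫ s in Set.Ioi (0:ℝ), qfun s) = -I := by rw [hI]; ring
    rw [hphiA, hAint, hq]
    ring
  have hquarter : Tendsto (fun N : ℕ => 1/(4*(N:ℝ))) atTop (nhds 0) := by
    have h := tendsto_one_div_atTop_nhds_zero_nat.const_mul (1/4 : ℝ)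
    rw [mul_zero] at h
    apply h.congr
    intro n
    ring
  have hJ0 : Tendsto (fun N : ℕ => ∫ s in Set.Ioi (0:ℝ), rfun N s) atTop (nhds 0) := by
    apply tendsto_of_tendsto_of_tendsto_of_le_of_le' tendsto_const_nhds hquarter
    · filter_upwards [eventually_ge_atTop 1] with N hN
      exact (rfun_integral_bound hN).1
    · filter_upwards [eventually_ge_atTop 1] with N hN
      exact (rfun_integral_bound hN).2
  have hfinal : Tendsto (fun N : ℕ => -(1/4) * I + (1/4) * ∫ s in Set.Ioi (0:ℝ), rfun N s)
      atTop (nhds (-(1/4) * I)) := by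
    have := tendsto_const_nhds (x := -(1/4) * I) (f := atTop (α := ℕ)) |>.add
      (hJ0.const_mul (1/4 : ℝ))
    simpa using this
  apply hfinal.congr'
  filter_upwards [eventually_ge_atTop 1] with N hN
  exact (hphi N hN).symm
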